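/- Let y be a truncated moment sequence of order 2(d+δ) with y_0 = 1, and suppose the localizing matrix M_{d+δ−1}((1−‖x‖²) y) is positive semidefinite and M_{d+δ}(y) is positive semidefinite. Then L_y(x_i^{2(d+δ)}) ≤ 1 for every i = 1,…,n. -/

import Mathlib

open MeasureTheory Real Matrix
open scoped BigOperators ENNReal

/-- Multi-indices in `n` variables of total degree at most `d`. -/
def Idx (n d : ℕ) : Type := {α : Fin n → Fin (d+1) // ∑ i, (α i : ℕ) ≤ d}

instance (n d : ℕ) : Fintype (Idx n d) := by unfold Idx; infer_instance
instance (n d : ℕ) : DecidableEq (Idx n d) := by unfold Idx; infer_instance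

/-- The multi-index (exponent vector) associated with an element of `Idx n d`. -/
def toMI {n d : ℕ} (A : Idx n d) : Fin n → ℕ := fun i => (A.1 i : ℕ)

/-- The monomial `x^α`. -/
noncomputable def mono {n : ℕ} (x : Fin n → ℝ) (α : Fin n → ℕ) : ℝ := ∏ i, x i ^ α i

/-- The moment matrix of order `d` of a (pseudo-)moment sequence `y`. -/
noncomputable def momMat (n d : ℕ) (y : (Fin n → ℕ) → ℝ) : Matrix (Idx n d) (Idx n d) ℝ :=
  Matrix.of fun α β => y (toMI α + toMI β)

/-- The vector of monomials of degree at most `d`. -/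
noncomputable def vd (n d : ℕ) (x : Fin n → ℝ) : Idx n d → ℝ := fun α => mono x (toMI α)

/-- The localizing matrix `M_k(g y)` of a polynomial `g` and a sequence `y`, with entries
`L_y(g · x^α x^β)` for `|α|, |β| ≤ k`. -/
noncomputable def locMat (n k : ℕ) (g : MvPolynomial (Fin n) ℝ) (y : (Fin n → ℕ) → ℝ) :
    Matrix (Idx n k) (Idx n k) ℝ :=
  Matrix.of fun α β => ∑ γ ∈ g.support, g.coeff γ * y (⇑γ + toMI α + toMI β)

/-- Diagonal entries of a real PSD matrix are nonnegative. -/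
lemma psd_diag_nonneg {ι : Type*} [Fintype ι] [DecidableEq ι] {M : Matrix ι ι ℝ}
    (h : M.PosSemidef) (a : ι) : 0 ≤ M a a := by
  exact h.diag_nonneg

/-- Evaluating the support-sum against the ball polynomial. -/
lemma ball_support_sum {n : ℕ} (F : (Fin n →₀ ℕ) → ℝ) :
    ∑ γ ∈ (1 - ∑ i : Fin n, MvPolynomial.X i ^ 2 : MvPolynomial (Fin n) ℝ).support,
      (1 - ∑ i : Fin n, MvPolynomial.X i ^ 2 : MvPolynomial (Fin n) ℝ).coeff γ * F γ
      = F 0 - ∑ j : Fin n, F (Finsupp.single j 2) := by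
  have key : ∀ g : MvPolynomial (Fin n) ℝ,
      ∑ γ ∈ g.support, g.coeff γ * F γ = ((Finsupp.linearCombination ℝ F).comp
          (AddMonoidAlgebra.coeffLinearEquiv ℝ).toLinearMap) g := by
    intro g
    rw [LinearMap.comp_apply, Finsupp.linearCombination_apply, Finsupp.sum]
    rfl
  rw [key, map_sub, map_sum]
  congr 1
  · have : AddMonoidAlgebra.coeffLinearEquiv ℝ (1 : MvPolynomial (Fin n) ℝ) = Finsupp.single 0 1 := rfl
    rw [LinearMap.comp_apply, LinearEquiv.coe_coe, this, Finsupp.linearCombination_single, one_smul]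
  · refine Finset.sum_congr rfl fun j _ => ?_
    have : AddMonoidAlgebra.coeffLinearEquiv ℝ (MvPolynomial.X j ^ 2 : MvPolynomial (Fin n) ℝ)
        = Finsupp.single (Finsupp.single j 2) 1 := by
      rw [MvPolynomial.X_pow_eq_monomial]; rfl
    rw [LinearMap.comp_apply, LinearEquiv.coe_coe, this, Finsupp.linearCombination_single, one_smul]

/-- Constructor for `Idx` from an exponent vector with bounded total degree. -/
def mkIdx {n d : ℕ} (f : Fin n → ℕ) (h : ∑ j, f j ≤ d) : Idx n d :=
  ⟨fun j => ⟨f j, Nat.lt_succ_of_le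
      ((Finset.single_le_sum (fun k _ => Nat.zero_le (f k)) (Finset.mem_univ j)).trans h)⟩,
    by simpa [toMI] using h⟩

lemma toMI_mkIdx {n d : ℕ} (f : Fin n → ℕ) (h : ∑ j, f j ≤ d) : toMI (mkIdx f h) = f := rfl

/-- If `y` is a truncated sequence of order `2(d+δ)` with `y₀ = 1`, PSD localizing matrix
`M_{d+δ-1}((1-‖x‖²) y)` and PSD moment matrix `M_{d+δ}(y)`, then
`L_y(xᵢ^{2(d+δ)}) ≤ 1` for every `i`. -/
theorem ball_moment_bound (n d δ : ℕ) (y : (Fin n → ℕ) → ℝ) (hy0 : y 0 = 1)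
    (hloc : (locMat n (d + δ - 1) (1 - ∑ i : Fin n, MvPolynomial.X i ^ 2) y).PosSemidef)
    (hmom : (momMat n (d + δ) y).PosSemidef) :
    ∀ i : Fin n, y (fun j => if j = i then 2 * (d + δ) else 0) ≤ 1 := by
  intro i
  set N := d + δ with hN
  set v : ℕ → (Fin n → ℕ) := fun m j => if j = i then m else 0 with hv
  have hsum_v : ∀ m, ∑ j, v m j = m := by
    intro m; simp [hv]
  -- step lemma
  have step : ∀ k, k + 1 ≤ N → y (v (2 * (k + 1))) ≤ y (v (2 * k)) := by
    intro k hk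
    have hkle : ∑ j, v k j ≤ N - 1 := by
      rw [hsum_v]; omega
    set α₀ : Idx n (N - 1) := mkIdx (v k) hkle with hα₀
    have hdiag := psd_diag_nonneg hloc α₀
    have hentry : locMat n (N - 1) (1 - ∑ i : Fin n, MvPolynomial.X i ^ 2) y α₀ α₀
        = y (v (2 * k)) - ∑ j : Fin n, y (⇑(Finsupp.single j 2) + v k + v k) := by
      simp only [locMat, Matrix.of_apply]
      rw [ball_support_sum (fun γ => y (⇑γ + toMI α₀ + toMI α₀))]
      congr 1
      congr 1
      funext j
      simp [hα₀, toMI_mkIdx, hv]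
      split <;> ring
    -- each term of the sum is nonnegative
    have hterm : ∀ j : Fin n, 0 ≤ y (⇑(Finsupp.single j 2) + v k + v k) := by
      intro j
      have hwle : ∑ j', ((fun j' => (if j = j' then 1 else 0) + v k j') : Fin n → ℕ) j' ≤ N := by
        rw [Finset.sum_add_distrib, hsum_v]
        simp only [Finset.sum_ite_eq, Finset.mem_univ, if_true]
        omega
      have hm := psd_diag_nonneg hmom (mkIdx _ hwle)
      have : momMat n N y (mkIdx _ hwle) (mkIdx _ hwle)
          = y (⇑(Finsupp.single j 2) + v k + v k) := by
        simp only [momMat, Matrix.of_apply, toMI_mkIdx]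
        congr 1
        funext j'
        simp [Finsupp.single_apply, hv]
        split <;> split <;> ring
      rwa [this] at hm
    -- the i-th term equals y (v (2k+2))
    have hith : y (⇑(Finsupp.single i 2) + v k + v k) = y (v (2 * (k + 1))) := by
      congr 1
      funext j'
      simp [Finsupp.single_apply, hv, eq_comm]
      split <;> ring
    have hsumle : y (v (2 * (k + 1))) ≤ ∑ j : Fin n, y (⇑(Finsupp.single j 2) + v k + v k) := by
      rw [← hith]
      exact Finset.single_le_sum (fun j _ => hterm j) (Finset.mem_univ i)
    rw [hentry] at hdiag
    linarith
  -- main induction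
  have main : ∀ k, k ≤ N → y (v (2 * k)) ≤ 1 := by
    intro k
    induction k with
    | zero =>
        intro _
        have : v 0 = (0 : Fin n → ℕ) := by funext j; simp [hv]
        simp [this, hy0]
    | succ k ih =>
        intro hk
        exact (step k hk).trans (ih (by omega))
  exact main N le_rfl
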